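/- Let Γ be a countable group acting on a GCA A with countable joins, and let μ and ν be finite measures on A (i.e., homomorphisms A → ℝ⁺). Then μ and ν agree on every Γ-invariant element of A if and only if μ and ν are equidecomposable, i.e., there exist homomorphisms (μ_γ)_{γ∈Γ} from A to ℝ⁺ with μ = ∑_γ μ_γ and ν = ∑_γ γμ_γ (pointwise convergent sums). -/

import Mathlib

/-- A generalized cardinal algebra (Tarski): a set with a partial binary `add`,
a constant `zero`, and a partial `ω`-ary `sum`, satisfying Tarski's axioms.
Partiality is encoded by definedness predicates `addDef` and `sumDef`. -/
structure GCA (α : Type*) where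
  zero : α
  addDef : α → α → Prop
  add : α → α → α
  sumDef : (ℕ → α) → Prop
  sum : (ℕ → α) → α
  addDef_zero_right : ∀ a, addDef a zero
  addDef_zero_left : ∀ a, addDef zero a
  add_zero : ∀ a, add a zero = a
  zero_add : ∀ a, add zero a = a
  sum_tail : ∀ s, sumDef s →
    sumDef (fun n => s (n + 1)) ∧ addDef (s 0) (sum (fun n => s (n + 1))) ∧
      sum s = add (s 0) (sum (fun n => s (n + 1)))
  sum_add : ∀ s t : ℕ → α, (∀ n, addDef (s n) (t n)) →
    sumDef (fun n => add (s n) (t n)) →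
      sumDef s ∧ sumDef t ∧ addDef (sum s) (sum t) ∧
        sum (fun n => add (s n) (t n)) = add (sum s) (sum t)
  refinement : ∀ x y (c : ℕ → α), addDef x y → sumDef c → add x y = sum c →
    ∃ s t : ℕ → α, sumDef s ∧ sumDef t ∧ sum s = x ∧ sum t = y ∧
      ∀ n, addDef (s n) (t n) ∧ add (s n) (t n) = c n
  remainder : ∀ s t : ℕ → α, (∀ n, addDef (t n) (s (n + 1)) ∧ s n = add (t n) (s (n + 1))) →
    ∃ c, ∀ n, sumDef (fun i => t (i + n)) ∧ addDef c (sum (fun i => t (i + n))) ∧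
      s n = add c (sum (fun i => t (i + n)))

/-- The order induced by a GCA: `a ≤ b` iff `a + c = b` for some `c`. -/
def GCA.le {α : Type*} (A : GCA α) (a b : α) : Prop :=
  ∃ c, A.addDef a c ∧ A.add a c = b

open scoped NNReal

/-- A finite measure on a GCA `A`: a homomorphism `A → ℝ⁺`, where countable
sums in `ℝ⁺ = ℝ≥0` are convergent series. -/
def GCA.IsMeasure {α : Type*} (A : GCA α) (μ : α → ℝ≥0) : Prop :=
  μ A.zero = 0 ∧
  (∀ a b, A.addDef a b → μ (A.add a b) = μ a + μ b) ∧
  (∀ s : ℕ → α, A.sumDef s → HasSum (fun n => μ (s n)) (μ (A.sum s)))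

/-- An action of a group `Γ` on a GCA `A`: a group action such that each map
`a ↦ γ a` is a GCA homomorphism. -/
def GCA.IsAction {α Γ : Type*} [Group Γ] (A : GCA α) (act : Γ → α → α) : Prop :=
  (∀ a, act 1 a = a) ∧
  (∀ γ δ a, act γ (act δ a) = act (γ * δ) a) ∧
  (∀ γ : Γ,
    act γ A.zero = A.zero ∧
    (∀ a b, A.addDef a b →
      A.addDef (act γ a) (act γ b) ∧ act γ (A.add a b) = A.add (act γ a) (act γ b)) ∧
    (∀ s : ℕ → α, A.sumDef s →
      A.sumDef (fun n => act γ (s n)) ∧ act γ (A.sum s) = A.sum (fun n => act γ (s n))))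

/-- `a` and `b` are equidecomposable with respect to an action of `Γ` on a GCA
`A` if there is a countable family `(c n)` with labels `(g n)` in `Γ` such
that `a = ∑ₙ c n` and `b = ∑ₙ (g n) • (c n)` (this is the statement
`a = ∑_γ a_γ`, `b = ∑_γ γ a_γ`, with each `γ` allowed to label several
pieces). -/
def GCA.Equidecomposable {α Γ : Type*} [Group Γ] (A : GCA α) (act : Γ → α → α)
    (a b : α) : Prop :=
  ∃ (c : ℕ → α) (g : ℕ → Γ),
    A.sumDef c ∧ A.sum c = a ∧
    A.sumDef (fun n => act (g n) (c n)) ∧ A.sum (fun n => act (g n) (c n)) = b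

/-- `m` is the meet (greatest lower bound) of `a` and `b` in the order of the
GCA `A`. -/
def GCA.IsMeet {α : Type*} (A : GCA α) (a b m : α) : Prop :=
  A.le m a ∧ A.le m b ∧ ∀ x, A.le x a → A.le x b → A.le x m

namespace GCA

variable {α : Type*} {A : GCA α}

/-- Finitely supported helper sequences. -/
def sq1 (A : GCA α) (a : α) : ℕ → α
  | 0 => a
  | _+1 => A.zero

def sq2 (A : GCA α) (a b : α) : ℕ → α
  | 0 => a
  | 1 => b
  | _+2 => A.zero

def sq3 (A : GCA α) (a b c : α) : ℕ → α
  | 0 => a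
  | 1 => b
  | 2 => c
  | _+3 => A.zero

lemma sq1_tail (a : α) : (fun n => A.sq1 a (n+1)) = (fun _ => A.zero) := by
  funext n; rfl

lemma sq2_tail (a b : α) : (fun n => A.sq2 a b (n+1)) = A.sq1 b := by
  funext n; cases n <;> rfl

lemma sq3_tail (a b c : α) : (fun n => A.sq3 a b c (n+1)) = A.sq2 b c := by
  funext n; rcases n with _|_|n <;> rfl

/-- The sum of the constant zero sequence is defined and equals zero. -/
theorem sum_const_zero : A.sumDef (fun _ => A.zero) ∧ A.sum (fun _ => A.zero) = A.zero := by
  obtain ⟨c, hc⟩ := A.remainder (fun _ => A.zero) (fun _ => A.zero)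
    (fun n => ⟨A.addDef_zero_left _, (A.zero_add _).symm⟩)
  obtain ⟨hZdef, hcZ, hc0⟩ := hc 0
  have hZdef' : A.sumDef (fun _ => A.zero) := hZdef
  have hcZ' : A.addDef c (A.sum (fun _ : ℕ => A.zero)) := hcZ
  have hc0' : A.zero = A.add c (A.sum (fun _ : ℕ => A.zero)) := hc0
  refine ⟨hZdef', ?_⟩
  set Z := A.sum (fun _ : ℕ => A.zero) with hZdefn
  -- Z = Z + Z
  have hfz : (fun _ : ℕ => A.add A.zero A.zero) = (fun _ : ℕ => A.zero) := by
    funext n; exact A.zero_add _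
  have hzz : A.sumDef (fun _ : ℕ => A.add A.zero A.zero) := by rw [hfz]; exact hZdef'
  obtain ⟨_, _, _, hZZ⟩ := A.sum_add (fun _ => A.zero) (fun _ => A.zero)
    (fun _ => A.addDef_zero_left _) hzz
  have hZZ' : Z = A.add Z Z := by rw [hfz] at hZZ; exact hZZ
  -- chain (0, Z, 0, ...) with pieces (c, Z, 0, ...)
  have hchain : ∀ n, A.addDef (A.sq2 c Z n) (A.sq2 A.zero Z (n+1)) ∧
      A.sq2 A.zero Z n = A.add (A.sq2 c Z n) (A.sq2 A.zero Z (n+1)) := by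
    intro n
    rcases n with _|_|n
    · exact ⟨hcZ', hc0'⟩
    · exact ⟨A.addDef_zero_right Z, (A.add_zero Z).symm⟩
    · exact ⟨A.addDef_zero_left A.zero, (A.zero_add A.zero).symm⟩
  obtain ⟨r, hr⟩ := A.remainder (A.sq2 A.zero Z) (A.sq2 c Z) hchain
  obtain ⟨hT, _, _⟩ := hr 0
  have hT : A.sumDef (A.sq2 c Z) := hT
  -- value 1 : sum (sq2 c Z) = add c Z = 0
  obtain ⟨ht1, ht2, ht3⟩ := A.sum_tail _ hT
  rw [sq2_tail] at ht1 ht2 ht3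
  obtain ⟨hs1, hs2, hs3⟩ := A.sum_tail _ ht1
  rw [sq1_tail] at hs1 hs2 hs3
  have hsum1 : A.sum (A.sq1 Z) = Z := by rw [hs3]; exact hZZ'.symm
  have hval1 : A.sum (A.sq2 c Z) = A.zero := by
    rw [ht3, hsum1]; exact hc0'.symm
  -- value 2 : split into (0, Z, 0, ...) + (c, 0, 0, ...)
  have hfun : (fun n => A.add (A.sq2 A.zero Z n) (A.sq1 c n)) = A.sq2 c Z := by
    funext n
    rcases n with _|_|n
    · exact A.zero_add c
    · exact A.add_zero Z
    · exact A.zero_add A.zero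
  have hdefs : ∀ n, A.addDef (A.sq2 A.zero Z n) (A.sq1 c n) := by
    intro n
    rcases n with _|_|n
    · exact A.addDef_zero_left c
    · exact A.addDef_zero_right Z
    · exact A.addDef_zero_left A.zero
  obtain ⟨hu, hv, hD, heq⟩ := A.sum_add _ _ hdefs (by rw [hfun]; exact hT)
  rw [hfun, hval1] at heq
  obtain ⟨hu1, hu2, hu3⟩ := A.sum_tail _ hu
  rw [sq2_tail] at hu1 hu2 hu3
  have hsumu : A.sum (A.sq2 A.zero Z) = Z := by
    rw [hu3, hsum1]; exact A.zero_add Z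
  obtain ⟨hv1, hv2, hv3⟩ := A.sum_tail _ hv
  rw [sq1_tail] at hv1 hv2 hv3
  have hsumv : A.sum (A.sq1 c) = A.zero := by
    rw [hv3]; exact hc0'.symm
  rw [hsumu, hsumv, A.add_zero] at heq
  exact heq.symm

theorem sumDef_zero : A.sumDef (fun _ => A.zero) := sum_const_zero.1

theorem sum_zero' : A.sum (fun _ : ℕ => A.zero) = A.zero := sum_const_zero.2

theorem sumDef_sq1 (a : α) : A.sumDef (A.sq1 a) := by
  have hchain : ∀ n, A.addDef (A.sq1 a n) (A.sq1 a (n+1)) ∧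
      A.sq1 a n = A.add (A.sq1 a n) (A.sq1 a (n+1)) := by
    intro n
    rcases n with _|n
    · exact ⟨A.addDef_zero_right a, (A.add_zero a).symm⟩
    · exact ⟨A.addDef_zero_left A.zero, (A.zero_add A.zero).symm⟩
  obtain ⟨c, hc⟩ := A.remainder (A.sq1 a) (A.sq1 a) hchain
  exact (hc 0).1

theorem sum_sq1 (a : α) : A.sum (A.sq1 a) = a := by
  obtain ⟨h1, h2, h3⟩ := A.sum_tail _ (sumDef_sq1 (A := A) a)
  rw [sq1_tail, sum_zero'] at h3
  rw [h3]; exact A.add_zero a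

/-- Two-element sums exist and compute. -/
theorem sq2_spec {a b : α} (h : A.addDef a b) :
    A.sumDef (A.sq2 a b) ∧ A.sum (A.sq2 a b) = A.add a b := by
  have hchain : ∀ n, A.addDef (A.sq2 a b n) (A.sq2 (A.add a b) b (n+1)) ∧
      A.sq2 (A.add a b) b n = A.add (A.sq2 a b n) (A.sq2 (A.add a b) b (n+1)) := by
    intro n
    rcases n with _|_|n
    · exact ⟨h, rfl⟩
    · exact ⟨A.addDef_zero_right b, (A.add_zero b).symm⟩
    · exact ⟨A.addDef_zero_left A.zero, (A.zero_add A.zero).symm⟩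
  obtain ⟨r, hr⟩ := A.remainder (A.sq2 (A.add a b) b) (A.sq2 a b) hchain
  obtain ⟨hT, _, h0⟩ := hr 0
  obtain ⟨_, _, h2⟩ := hr 2
  have hT : A.sumDef (A.sq2 a b) := hT
  have htail2 : (fun i => A.sq2 a b (i+2)) = (fun _ => A.zero) := by
    funext i; rfl
  rw [htail2, sum_zero', A.add_zero] at h2
  have h2 : A.zero = r := h2
  have h0 : A.add a b = A.add r (A.sum (A.sq2 a b)) := h0
  rw [← h2, A.zero_add] at h0
  exact ⟨hT, h0.symm⟩

/-- Commutativity. -/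
theorem comm {a b : α} (h : A.addDef a b) :
    A.addDef b a ∧ A.add a b = A.add b a := by
  obtain ⟨hT, hTval⟩ := sq2_spec h
  have hfun : (fun n => A.add (A.sq2 A.zero b n) (A.sq1 a n)) = A.sq2 a b := by
    funext n
    rcases n with _|_|n
    · exact A.zero_add a
    · exact A.add_zero b
    · exact A.zero_add A.zero
  have hdefs : ∀ n, A.addDef (A.sq2 A.zero b n) (A.sq1 a n) := by
    intro n
    rcases n with _|_|n
    · exact A.addDef_zero_left a
    · exact A.addDef_zero_right b
    · exact A.addDef_zero_left A.zero
  obtain ⟨hu, hv, hD, heq⟩ := A.sum_add _ _ hdefs (by rw [hfun]; exact hT)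
  rw [hfun, hTval] at heq
  obtain ⟨hu1, hu2, hu3⟩ := A.sum_tail _ hu
  rw [sq2_tail] at hu3
  have hsumu : A.sum (A.sq2 A.zero b) = b := by
    rw [hu3, sum_sq1]; exact A.zero_add b
  rw [hsumu, sum_sq1] at heq hD
  exact ⟨hD, heq⟩

/-- Associativity, left-nested to right-nested. -/
theorem assocL {a b c : α} (h1 : A.addDef a b) (h2 : A.addDef (A.add a b) c) :
    A.addDef b c ∧ A.addDef a (A.add b c) ∧
      A.add (A.add a b) c = A.add a (A.add b c) := by
  obtain ⟨hW, hWval⟩ := sq2_spec h2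
  have hfun : (fun n => A.add (A.sq1 a n) (A.sq2 b c n)) = A.sq2 (A.add a b) c := by
    funext n
    rcases n with _|_|n
    · rfl
    · exact A.zero_add c
    · exact A.zero_add A.zero
  have hdefs : ∀ n, A.addDef (A.sq1 a n) (A.sq2 b c n) := by
    intro n
    rcases n with _|_|n
    · exact h1
    · exact A.addDef_zero_left c
    · exact A.addDef_zero_left A.zero
  obtain ⟨hu, hv, hD, heq⟩ := A.sum_add _ _ hdefs (by rw [hfun]; exact hW)
  rw [hfun, hWval] at heq
  obtain ⟨hv1, hv2, hv3⟩ := A.sum_tail _ hv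
  rw [sq2_tail, sum_sq1] at hv2 hv3
  have hv2' : A.addDef b c := hv2
  rw [sum_sq1, hv3] at heq hD
  exact ⟨hv2', hD, heq⟩

/-- Three-element sums from a right-nested defined sum. -/
theorem sq3_spec {a b c : α} (h1 : A.addDef b c) (h2 : A.addDef a (A.add b c)) :
    A.sumDef (A.sq3 a b c) ∧ A.sum (A.sq3 a b c) = A.add a (A.add b c) := by
  have hchain : ∀ n, A.addDef (A.sq3 a b c n)
        (A.sq3 (A.add a (A.add b c)) (A.add b c) c (n+1)) ∧
      A.sq3 (A.add a (A.add b c)) (A.add b c) c n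
        = A.add (A.sq3 a b c n) (A.sq3 (A.add a (A.add b c)) (A.add b c) c (n+1)) := by
    intro n
    rcases n with _|_|_|n
    · exact ⟨h2, rfl⟩
    · exact ⟨h1, rfl⟩
    · exact ⟨A.addDef_zero_right c, (A.add_zero c).symm⟩
    · exact ⟨A.addDef_zero_left A.zero, (A.zero_add A.zero).symm⟩
  obtain ⟨r, hr⟩ := A.remainder _ _ hchain
  obtain ⟨hT, _, h0⟩ := hr 0
  obtain ⟨_, _, h3⟩ := hr 3
  have hT : A.sumDef (A.sq3 a b c) := hT
  have htail3 : (fun i => A.sq3 a b c (i+3)) = (fun _ => A.zero) := by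
    funext i; rfl
  rw [htail3, sum_zero', A.add_zero] at h3
  have h3 : A.zero = r := h3
  have h0 : A.add a (A.add b c) = A.add r (A.sum (A.sq3 a b c)) := h0
  rw [← h3, A.zero_add] at h0
  exact ⟨hT, h0.symm⟩

/-- Associativity, right-nested to left-nested. -/
theorem assocR {a b c : α} (h1 : A.addDef b c) (h2 : A.addDef a (A.add b c)) :
    A.addDef a b ∧ A.addDef (A.add a b) c ∧
      A.add a (A.add b c) = A.add (A.add a b) c := by
  obtain ⟨hT, hTval⟩ := sq3_spec h1 h2
  have hfun : (fun n => A.add (A.sq2 a b n) (A.sq3 A.zero A.zero c n)) = A.sq3 a b c := by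
    funext n
    rcases n with _|_|_|n
    · exact A.add_zero a
    · exact A.add_zero b
    · exact A.zero_add c
    · exact A.zero_add A.zero
  have hdefs : ∀ n, A.addDef (A.sq2 a b n) (A.sq3 A.zero A.zero c n) := by
    intro n
    rcases n with _|_|_|n
    · exact A.addDef_zero_right a
    · exact A.addDef_zero_right b
    · exact A.addDef_zero_left c
    · exact A.addDef_zero_left A.zero
  obtain ⟨hu, hv, hD, heq⟩ := A.sum_add _ _ hdefs (by rw [hfun]; exact hT)
  rw [hfun, hTval] at heq
  obtain ⟨hu1, hu2, hu3⟩ := A.sum_tail _ hu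
  rw [sq2_tail, sum_sq1] at hu2 hu3
  have hu2' : A.addDef a b := hu2
  obtain ⟨hv1, hv2, hv3⟩ := A.sum_tail _ hv
  rw [sq3_tail] at hv1 hv3
  obtain ⟨hw1, hw2, hw3⟩ := A.sum_tail _ hv1
  rw [sq2_tail, sum_sq1] at hw3
  have hw3' : A.sum (A.sq2 A.zero c) = c := by
    rw [hw3]; exact A.zero_add c
  have hsumv : A.sum (A.sq3 A.zero A.zero c) = c := by
    rw [hv3, hw3']; exact A.zero_add c
  rw [hu3, hsumv] at heq hD
  exact ⟨hu2', hD, heq⟩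

/-- Mid swap: `a + (b + c) = b + (a + c)`. -/
theorem midswap {a b c : α} (h1 : A.addDef b c) (h2 : A.addDef a (A.add b c)) :
    A.addDef a c ∧ A.addDef b (A.add a c) ∧
      A.add a (A.add b c) = A.add b (A.add a c) := by
  obtain ⟨hT, hTval⟩ := sq3_spec h1 h2
  have hfun : (fun n => A.add (A.sq3 A.zero b A.zero n) (A.sq3 a A.zero c n)) = A.sq3 a b c := by
    funext n
    rcases n with _|_|_|n
    · exact A.zero_add a
    · exact A.add_zero b
    · exact A.zero_add c
    · exact A.zero_add A.zero
  have hdefs : ∀ n, A.addDef (A.sq3 A.zero b A.zero n) (A.sq3 a A.zero c n) := by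
    intro n
    rcases n with _|_|_|n
    · exact A.addDef_zero_left a
    · exact A.addDef_zero_right b
    · exact A.addDef_zero_left c
    · exact A.addDef_zero_left A.zero
  obtain ⟨hu, hv, hD, heq⟩ := A.sum_add _ _ hdefs (by rw [hfun]; exact hT)
  rw [hfun, hTval] at heq
  -- sum u = b
  obtain ⟨hu1, hu2, hu3⟩ := A.sum_tail _ hu
  rw [sq3_tail] at hu1 hu3
  obtain ⟨hx1, hx2, hx3⟩ := A.sum_tail _ hu1
  rw [sq2_tail, sum_sq1, A.add_zero] at hx3
  have hsumu : A.sum (A.sq3 A.zero b A.zero) = b := by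
    rw [hu3, hx3]; exact A.zero_add b
  -- sum v = add a c
  obtain ⟨hv1, hv2, hv3⟩ := A.sum_tail _ hv
  rw [sq3_tail] at hv1 hv2 hv3
  obtain ⟨hy1, hy2, hy3⟩ := A.sum_tail _ hv1
  rw [sq2_tail, sum_sq1] at hy3
  have hy3' : A.sum (A.sq2 A.zero c) = c := by
    rw [hy3]; exact A.zero_add c
  rw [hy3'] at hv2 hv3
  have hv2' : A.addDef a c := hv2
  have hsumv : A.sum (A.sq3 a A.zero c) = A.add a c := hv3
  rw [hsumu, hsumv] at heq hD
  exact ⟨hv2', hD, heq⟩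

theorem le_refl' (a : α) : A.le a a := ⟨A.zero, A.addDef_zero_right a, A.add_zero a⟩

theorem le_trans' {a b c : α} (h1 : A.le a b) (h2 : A.le b c) : A.le a c := by
  obtain ⟨u, hu, huv⟩ := h1
  obtain ⟨v, hv, hvv⟩ := h2
  have hv' : A.addDef (A.add a u) v := by rw [huv]; exact hv
  obtain ⟨huv2, hauv, heq⟩ := assocL hu hv'
  exact ⟨A.add u v, hauv, by rw [← heq, huv]; exact hvv⟩

/-- Antisymmetry of the GCA order. -/
theorem le_antisymm' {a b : α} (h1 : A.le a b) (h2 : A.le b a) : a = b := by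
  obtain ⟨c, hc, hcv⟩ := h1
  obtain ⟨d, hd, hdv⟩ := h2
  have h2' : A.addDef (A.add a c) d := by rw [hcv]; exact hd
  have key : A.add (A.add a c) d = a := by rw [hcv]; exact hdv
  obtain ⟨hcd, hacd, heq⟩ := assocL hc h2'
  have habs : A.add a (A.add c d) = a := by rw [← heq]; exact key
  obtain ⟨hda, hcomm⟩ := comm hacd
  have habs' : A.add (A.add c d) a = a := by rw [← hcomm]; exact habs
  obtain ⟨r, hr⟩ := A.remainder (fun _ => a) (fun _ => A.add c d)
    (fun n => ⟨hda, habs'.symm⟩)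
  obtain ⟨hEdef, hrE, hra⟩ := hr 0
  have hEdef : A.sumDef (fun _ : ℕ => A.add c d) := hEdef
  have hrE : A.addDef r (A.sum (fun _ : ℕ => A.add c d)) := hrE
  have hra : a = A.add r (A.sum (fun _ : ℕ => A.add c d)) := hra
  obtain ⟨hCdef, hDdef, hCD, hEeq⟩ := A.sum_add (fun _ => c) (fun _ => d) (fun _ => hcd) hEdef
  obtain ⟨_, hcC, hCv⟩ := A.sum_tail (fun _ => c) hCdef
  have hac' : A.addDef (A.add r (A.sum (fun _ : ℕ => A.add c d))) c := by
    rw [← hra]; exact hc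
  obtain ⟨hEc, hrEc, h3⟩ := assocL hrE hac'
  obtain ⟨hcE, h4⟩ := comm hEc
  have hcE' : A.addDef c (A.add (A.sum fun _ : ℕ => c) (A.sum fun _ : ℕ => d)) := by
    rw [← hEeq]; exact hcE
  obtain ⟨hcC2, hccD, h5⟩ := assocR hCD hcE'
  have hkey : A.add c (A.sum (fun _ : ℕ => A.add c d)) = A.sum (fun _ : ℕ => A.add c d) := by
    rw [hEeq, h5, ← hCv]
  calc a = A.add r (A.sum (fun _ : ℕ => A.add c d)) := hra
    _ = A.add r (A.add c (A.sum (fun _ : ℕ => A.add c d))) := by rw [hkey]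
    _ = A.add r (A.add (A.sum (fun _ : ℕ => A.add c d)) c) := by rw [← h4]
    _ = A.add (A.add r (A.sum (fun _ : ℕ => A.add c d))) c := h3.symm
    _ = b := by rw [← hra]; exact hcv

/-- Positivity: the zero element has no nontrivial decompositions. -/
theorem eq_zero_of_add_eq_zero {a b : α} (h : A.addDef a b) (h0 : A.add a b = A.zero) :
    a = A.zero ∧ b = A.zero := by
  obtain ⟨hba, hcomm⟩ := comm h
  constructor
  · exact le_antisymm' ⟨b, h, h0⟩ ⟨a, A.addDef_zero_left a, A.zero_add a⟩
  · exact le_antisymm' ⟨a, hba, by rw [← hcomm]; exact h0⟩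
      ⟨b, A.addDef_zero_left b, A.zero_add b⟩

/-- If `a + b` is defined and `c ≤ b` then `a + c` is defined. -/
theorem addDef_of_le_right {a b c : α} (h : A.addDef a b) (h2 : A.le c b) :
    A.addDef a c := by
  obtain ⟨r, hr, hrv⟩ := h2
  exact (assocR hr (by rw [hrv]; exact h)).1

/-- Sums with support in `{0,1,2}` compute as triple additions. -/
theorem sum_support3 (S : ℕ → α) (hS : A.sumDef S) (h3 : ∀ i, S (i+3) = A.zero) :
    A.addDef (S 1) (S 2) ∧ A.addDef (S 0) (A.add (S 1) (S 2)) ∧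
      A.sum S = A.add (S 0) (A.add (S 1) (S 2)) := by
  obtain ⟨t1, t1d, t1v⟩ := A.sum_tail S hS
  obtain ⟨t2, t2d, t2v⟩ := A.sum_tail _ t1
  obtain ⟨t3, t3d, t3v⟩ := A.sum_tail _ t2
  have htail : (fun n => S (n + 1 + 1 + 1)) = (fun _ => A.zero) := by
    funext n
    have h' : n + 1 + 1 + 1 = n + 3 := by omega
    rw [h']; exact h3 n
  rw [htail, sum_zero', A.add_zero] at t3v
  rw [t3v] at t2d t2v
  rw [t2v] at t1d t1v
  exact ⟨t2d, t1d, t1v⟩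

end GCA
namespace GCA

variable {α : Type*} {A : GCA α}

theorem measure_mono {φ : α → ℝ≥0} (hφ : A.IsMeasure φ) {a b : α} (h : A.le a b) :
    φ a ≤ φ b := by
  obtain ⟨c, hc, hcv⟩ := h
  rw [← hcv, hφ.2.1 a c hc]
  exact le_self_add

theorem le_of_piece_right {a b c : α} (h : A.addDef a b) (hv : A.add a b = c) :
    A.le b c := by
  obtain ⟨hba, hcm⟩ := comm h
  exact ⟨a, hba, by rw [← hcm]; exact hv⟩

/-- Key lemma: the measure of a least upper bound of a countable family is at
most the sum of the measures. -/
theorem measure_lub_le_tsum {φ : α → ℝ≥0} (hφ : A.IsMeasure φ) (s : ℕ → α) (j : α)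
    (hub : ∀ n, A.le (s n) j) (hleast : ∀ x, (∀ n, A.le (s n) x) → A.le j x)
    (hsum : Summable fun n => φ (s n)) :
    φ j ≤ ∑' n, φ (s n) := by
  classical
  set Inv : ℕ → α × α → Prop := fun n p =>
    A.addDef (s n) p.1 ∧ A.addDef (A.add (s n) p.1) p.2 ∧ A.add (A.add (s n) p.1) p.2 = j
    with hInvDef
  set Link : ℕ → α × α → α × α → Prop := fun n p q =>
    ∃ S0 σ1 S2 T0 T2 : α,
      (A.addDef S0 T0 ∧ A.add S0 T0 = s n) ∧
      (A.addDef σ1 q.1 ∧ p.1 = A.add σ1 q.1) ∧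
      (A.addDef S2 T2 ∧ A.add S2 T2 = p.2) ∧
      (A.addDef T0 T2 ∧ q.2 = A.add T0 T2) ∧
      (A.addDef σ1 S2 ∧ A.addDef S0 (A.add σ1 S2) ∧ s (n+1) = A.add S0 (A.add σ1 S2))
    with hLinkDef
  obtain ⟨e0, he0, he0v⟩ := hub 0
  have hp0 : Inv 0 (e0, A.zero) := by
    refine ⟨he0, A.addDef_zero_right _, ?_⟩
    show A.add (A.add (s 0) e0) A.zero = j
    rw [A.add_zero]; exact he0v
  have step : ∀ n (p : α × α), Inv n p → ∃ q : α × α, Inv (n+1) q ∧ Link n p q := by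
    intro n p hI
    obtain ⟨hI1, hI2, hI3⟩ := hI
    obtain ⟨he_r, hsn_er, hassoc⟩ := assocL hI1 hI2
    obtain ⟨hsq3d, hsq3v⟩ := sq3_spec he_r hsn_er
    obtain ⟨w, hw, hwv⟩ := hub (n+1)
    have hsq3j : A.sum (A.sq3 (s n) p.1 p.2) = j := by
      rw [hsq3v, ← hassoc]; exact hI3
    obtain ⟨S, T, hSd, hTd, hSv, hTv, hrel⟩ :=
      A.refinement (s (n+1)) w (A.sq3 (s n) p.1 p.2) hw hsq3d (by rw [hwv, hsq3j])
    have hz : ∀ i, S (i+3) = A.zero ∧ T (i+3) = A.zero := by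
      intro i
      exact eq_zero_of_add_eq_zero (hrel (i+3)).1 ((hrel (i+3)).2)
    obtain ⟨hS12, hS012, hSsum⟩ := sum_support3 S hSd (fun i => (hz i).1)
    obtain ⟨hT12, hT012, hTsum⟩ := sum_support3 T hTd (fun i => (hz i).2)
    have row0 : A.addDef (S 0) (T 0) ∧ A.add (S 0) (T 0) = s n := hrel 0
    have row1 : A.addDef (S 1) (T 1) ∧ A.add (S 1) (T 1) = p.1 := hrel 1
    have row2 : A.addDef (S 2) (T 2) ∧ A.add (S 2) (T 2) = p.2 := hrel 2
    have hwT : w = A.add (T 0) (A.add (T 1) (T 2)) := by rw [← hTv, hTsum]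
    obtain ⟨hT02, hT1_, hmsw⟩ := midswap hT12 hT012
    have hw' : A.addDef (s (n+1)) (A.add (T 1) (A.add (T 0) (T 2))) := by
      rw [← hmsw, ← hwT]; exact hw
    obtain ⟨hq1, hq2, hq3⟩ := assocR hT1_ hw'
    refine ⟨(T 1, A.add (T 0) (T 2)), ⟨hq1, hq2, ?_⟩, ?_⟩
    · rw [← hq3, ← hmsw, ← hwT, hwv]
    · exact ⟨S 0, S 1, S 2, T 0, T 2, ⟨row0.1, row0.2⟩, ⟨row1.1, row1.2.symm⟩,
        ⟨row2.1, row2.2⟩, ⟨hT02, rfl⟩, ⟨hS12, hS012, by rw [← hSsum, hSv]⟩⟩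
  let G : ∀ n : ℕ, {p : α × α // Inv n p} := fun n =>
    Nat.rec ⟨(e0, A.zero), hp0⟩
      (fun m q => ⟨(step m q.1 q.2).choose, (step m q.1 q.2).choose_spec.1⟩) n
  have hGInv : ∀ n, Inv n (G n).1 := fun n => (G n).2
  have hGlink : ∀ n, Link n (G n).1 (G (n+1)).1 := fun n =>
    (step n (G n).1 (G n).2).choose_spec.2
  have hG0 : (G 0).1.2 = A.zero := rfl
  choose S0f σ1f S2f T0f T2f hL using hGlink
  have hchain : ∀ n, A.addDef (σ1f n) ((G (n+1)).1.1) ∧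
      (G n).1.1 = A.add (σ1f n) ((G (n+1)).1.1) := by
    intro n
    exact ⟨(hL n).2.1.1, (hL n).2.1.2⟩
  obtain ⟨cc, hcc⟩ := A.remainder (fun n => (G n).1.1) σ1f hchain
  set Tail : ℕ → α := fun n => A.sum (fun i => σ1f (i + n)) with hTailDef
  have hccn : ∀ n, A.sumDef (fun i => σ1f (i + n)) ∧ A.addDef cc (Tail n) ∧
      (G n).1.1 = A.add cc (Tail n) := hcc
  have hTailChain : ∀ n, A.addDef (σ1f n) (Tail (n+1)) ∧
      Tail n = A.add (σ1f n) (Tail (n+1)) := by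
    intro n
    obtain ⟨td, ta, tv⟩ := A.sum_tail _ (hccn n).1
    have hfn : (fun i => σ1f (i + 1 + n)) = (fun i => σ1f (i + (n+1))) := by
      funext i; congr 1; omega
    have h0 : (0 : ℕ) + n = n := by omega
    rw [hfn] at ta tv
    rw [h0] at ta tv
    exact ⟨ta, tv⟩
  -- j = cc + ((s n + Tail n) + r n)
  have hjV : ∀ n, A.addDef (s n) (Tail n) ∧
      A.addDef (A.add (s n) (Tail n)) ((G n).1.2) ∧
      A.addDef cc (A.add (A.add (s n) (Tail n)) ((G n).1.2)) ∧
      j = A.add cc (A.add (A.add (s n) (Tail n)) ((G n).1.2)) := by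
    intro n
    obtain ⟨hI1, hI2, hI3⟩ := hGInv n
    have hI1' : A.addDef (s n) (A.add cc (Tail n)) := by
      rw [← (hccn n).2.2]; exact hI1
    obtain ⟨hsT, hccsT, hms⟩ := midswap (hccn n).2.1 hI1'
    have hI2' : A.addDef (A.add cc (A.add (s n) (Tail n))) ((G n).1.2) := by
      rw [← hms, ← (hccn n).2.2]; exact hI2
    obtain ⟨hXr, hccXr, hasc⟩ := assocL hccsT hI2'
    refine ⟨hsT, hXr, hccXr, ?_⟩
    rw [← hasc, ← hms, ← (hccn n).2.2]
    exact hI3.symm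
  -- V is constant in n
  have hVconst : ∀ n, A.add (A.add (s (n+1)) (Tail (n+1))) ((G (n+1)).1.2)
      = A.add (A.add (s n) (Tail n)) ((G n).1.2) := by
    intro n
    obtain ⟨hsT, hXr, _, _⟩ := hjV n
    obtain ⟨hsT', hXr', _, _⟩ := hjV (n+1)
    obtain ⟨⟨g1d, g1v⟩, ⟨g2d, g2v⟩, ⟨g3d, g3v⟩, ⟨g4d, g4v⟩, ⟨g5a, g5b, g5v⟩⟩ := hL n
    obtain ⟨hTc1, hTc2⟩ := hTailChain n
    -- RHS normalization
    obtain ⟨dTnr, daTnr, e1⟩ := assocL hsT hXr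
    have dTnr' : A.addDef (A.add (σ1f n) (Tail (n+1))) ((G n).1.2) := by
      rw [← hTc2]; exact dTnr
    obtain ⟨dQr, dσQr, e2⟩ := assocL hTc1 dTnr'
    have dQr' : A.addDef (Tail (n+1)) (A.add (S2f n) (T2f n)) := by
      rw [g3v]; exact dQr
    obtain ⟨dQT2, dS2QT2, e3⟩ := midswap g3d dQr'
    rw [hTc2, e2, ← g3v, e3] at daTnr
    have daM' : A.addDef (A.add (S0f n) (T0f n))
        (A.add (σ1f n) (A.add (S2f n) (A.add (Tail (n+1)) (T2f n)))) := by
      rw [g1v]; exact daTnr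
    obtain ⟨dT0M, dS0T0M, e4⟩ := assocL g1d daM'
    rw [← g3v, e3] at dσQr
    obtain ⟨dT0W, dσT0W, e5⟩ := midswap dσQr dT0M
    obtain ⟨dT0QT2, dS2', e6⟩ := midswap dS2QT2 dT0W
    obtain ⟨dT0T2', dQ', e7⟩ := midswap dQT2 dT0QT2
    have eRHS : A.add (A.add (s n) (Tail n)) ((G n).1.2)
        = A.add (S0f n) (A.add (σ1f n) (A.add (S2f n)
            (A.add (Tail (n+1)) (A.add (T0f n) (T2f n))))) := by
      rw [e1, hTc2, e2, ← g3v, e3, ← g1v, e4, e5, e6, e7]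
    -- LHS normalization
    obtain ⟨dQr2, da'Qr', eL1⟩ := assocL hsT' hXr'
    have da'' : A.addDef (A.add (S0f n) (A.add (σ1f n) (S2f n)))
        (A.add (Tail (n+1)) ((G (n+1)).1.2)) := by
      rw [← g5v]; exact da'Qr'
    obtain ⟨dσS2Y, dS0Y, eL2⟩ := assocL g5b da''
    obtain ⟨dS2Y, dσ1SY, eL3⟩ := assocL g5a dσS2Y
    have eLHS : A.add (A.add (s (n+1)) (Tail (n+1))) ((G (n+1)).1.2)
        = A.add (S0f n) (A.add (σ1f n) (A.add (S2f n)
            (A.add (Tail (n+1)) (A.add (T0f n) (T2f n))))) := by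
      rw [eL1, g5v, eL2, eL3, g4v]
    exact eLHS.trans eRHS.symm
  have hVn : ∀ n, A.add (A.add (s n) (Tail n)) ((G n).1.2)
      = A.add (A.add (s 0) (Tail 0)) ((G 0).1.2) := by
    intro n
    induction n with
    | zero => rfl
    | succ n ih => rw [hVconst n]; exact ih
  -- j ≤ V 0
  have hubV : ∀ k, A.le (s k) (A.add (A.add (s 0) (Tail 0)) ((G 0).1.2)) := by
    intro k
    rw [← hVn k]
    exact le_trans' ⟨Tail k, (hjV k).1, rfl⟩ ⟨(G k).1.2, (hjV k).2.1, rfl⟩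
  have hjleV := hleast _ hubV
  -- φ cc = 0
  have hφj0 : φ j = φ cc + φ (A.add (A.add (s 0) (Tail 0)) ((G 0).1.2)) := by
    have h := (hjV 0).2.2.2
    rw [h, hφ.2.1 _ _ (hjV 0).2.2.1]
  have hcc0 : φ cc = 0 := by
    have h1 : φ j ≤ φ (A.add (A.add (s 0) (Tail 0)) ((G 0).1.2)) := measure_mono hφ hjleV
    rw [hφj0] at h1
    have h2 : φ cc + φ (A.add (A.add (s 0) (Tail 0)) ((G 0).1.2))
        ≤ 0 + φ (A.add (A.add (s 0) (Tail 0)) ((G 0).1.2)) := by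
      rw [_root_.zero_add]; exact h1
    exact le_antisymm ((add_le_add_iff_right _).mp h2) zero_le
  -- measure bookkeeping
  have hφj : ∀ n, φ j = φ (s n) + φ ((G n).1.1) + φ ((G n).1.2) := by
    intro n
    obtain ⟨hI1, hI2, hI3⟩ := hGInv n
    rw [← hI3, hφ.2.1 _ _ hI2, hφ.2.1 _ _ hI1]
  have hφe : ∀ n, φ ((G n).1.1) = φ cc + φ (Tail n) := by
    intro n
    rw [(hccn n).2.2, hφ.2.1 _ _ (hccn n).2.1]
  have hφr : ∀ n, φ ((G n).1.2) ≤ ∑ k ∈ Finset.range n, φ (s k) := by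
    intro n
    induction n with
    | zero => rw [hG0, hφ.1]; simp
    | succ n ih =>
      obtain ⟨⟨g1d, g1v⟩, _, ⟨g3d, g3v⟩, ⟨g4d, g4v⟩, _⟩ := hL n
      have hT0 : φ (T0f n) ≤ φ (s n) := measure_mono hφ (le_of_piece_right g1d g1v)
      have hT2 : φ (T2f n) ≤ φ ((G n).1.2) := measure_mono hφ (le_of_piece_right g3d g3v)
      calc φ ((G (n+1)).1.2) = φ (T0f n) + φ (T2f n) := by rw [g4v, hφ.2.1 _ _ g4d]
        _ ≤ (∑ k ∈ Finset.range n, φ (s k)) + φ (s n) := by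
            rw [add_comm]
            exact add_le_add (hT2.trans ih) hT0
        _ = ∑ k ∈ Finset.range (n+1), φ (s k) := (Finset.sum_range_succ _ n).symm
  have hHS : HasSum (fun i => φ (σ1f i)) (φ (Tail 0)) := by
    have h := hφ.2.2 _ (hccn 0).1
    exact h
  have hTailS : ∀ n, φ (Tail 0) = (∑ k ∈ Finset.range n, φ (σ1f k)) + φ (Tail n) := by
    intro n
    induction n with
    | zero => simp
    | succ n ih =>
      rw [ih, Finset.sum_range_succ]
      have : φ (Tail n) = φ (σ1f n) + φ (Tail (n+1)) := by
        rw [(hTailChain n).2, hφ.2.1 _ _ (hTailChain n).1]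
      rw [this, add_assoc]
  have htail_small : ∀ ε : ℝ≥0, 0 < ε → ∃ n, φ (Tail n) ≤ ε := by
    intro ε hε
    by_cases h0 : φ (Tail 0) ≤ ε
    · exact ⟨0, h0⟩
    · push_neg at h0
      have hpos : 0 < φ (Tail 0) := lt_of_le_of_lt zero_le h0
      have hlt : φ (Tail 0) - ε < φ (Tail 0) := tsub_lt_self hpos hε
      have hev := (hHS.tendsto_sum_nat).eventually (eventually_gt_nhds hlt)
      obtain ⟨n, hn⟩ := hev.exists
      refine ⟨n, ?_⟩
      have h2 : φ (Tail 0) < (∑ k ∈ Finset.range n, φ (σ1f k)) + ε :=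
        (tsub_lt_iff_right h0.le).mp hn
      rw [hTailS n] at h2
      exact le_of_lt ((add_lt_add_iff_left _).mp h2)
  refine le_of_forall_pos_le_add ?_
  intro ε hε
  obtain ⟨n, hn⟩ := htail_small ε hε
  calc φ j = φ (s n) + (φ cc + φ (Tail n)) + φ ((G n).1.2) := by rw [hφj n, hφe n]
    _ = φ (s n) + φ (Tail n) + φ ((G n).1.2) := by rw [hcc0, _root_.zero_add]
    _ ≤ φ (s n) + ε + ∑ k ∈ Finset.range n, φ (s k) :=
        add_le_add (add_le_add le_rfl hn) (hφr n)
    _ = (∑ k ∈ Finset.range (n+1), φ (s k)) + ε := by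
        rw [Finset.sum_range_succ]; ring
    _ ≤ (∑' k, φ (s k)) + ε :=
        add_le_add (Summable.sum_le_tsum _ (fun _ _ => zero_le) hsum) le_rfl

end GCA
open scoped ENNReal

namespace GCA

variable {α : Type*} {A : GCA α}

lemma half_lt_one' : (2⁻¹ : ℝ≥0) < 1 := by
  rw [← NNReal.coe_lt_coe]; norm_num

lemma one_sub_half' : (1:ℝ≥0) - 2⁻¹ = 2⁻¹ := by
  rw [← NNReal.coe_injective.eq_iff,
    NNReal.coe_sub (by rw [← NNReal.coe_le_coe]; norm_num)]
  norm_num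

lemma tsum_eps_geom (ε : ℝ≥0) : ∑' n : ℕ, ε * (2⁻¹) ^ (n+1) = ε := by
  have h1 : ∀ n : ℕ, ε * (2⁻¹ : ℝ≥0) ^ (n+1) = (ε * 2⁻¹) * (2⁻¹) ^ n := by
    intro n; rw [pow_succ]; ring
  rw [tsum_congr h1, NNReal.tsum_mul_left, tsum_geometric_nnreal half_lt_one',
    one_sub_half', inv_inv, mul_assoc, inv_mul_cancel₀ (two_ne_zero), mul_one]

lemma summable_eps_geom (ε : ℝ≥0) : Summable (fun n : ℕ => ε * (2⁻¹ : ℝ≥0) ^ (n+1)) := by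
  have h1 : ∀ n : ℕ, ε * (2⁻¹ : ℝ≥0) ^ (n+1) = (ε * 2⁻¹) * (2⁻¹) ^ n := by
    intro n; rw [pow_succ]; ring
  exact Summable.congr ((NNReal.summable_geometric half_lt_one').mul_left (ε * 2⁻¹))
    (fun n => (h1 n).symm)

/-- Translating a measure by a homomorphism of the action. -/
theorem isMeasure_comp_act {Γ : Type*} [Group Γ] {act : Γ → α → α}
    (hact : A.IsAction act) {φ : α → ℝ≥0} (hφ : A.IsMeasure φ) (γ : Γ) :
    A.IsMeasure (fun x => φ (act γ x)) := by
  obtain ⟨hz, hadd, hsum⟩ := hφ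
  obtain ⟨h1, h2, h3⟩ := hact
  refine ⟨?_, ?_, ?_⟩
  · show φ (act γ A.zero) = 0
    rw [(h3 γ).1, hz]
  · intro a b hab
    show φ (act γ (A.add a b)) = φ (act γ a) + φ (act γ b)
    rw [((h3 γ).2.1 a b hab).2, hadd _ _ ((h3 γ).2.1 a b hab).1]
  · intro s hs
    obtain ⟨hsd, hsv⟩ := (h3 γ).2.2 s hs
    show HasSum (fun n => φ (act γ (s n))) (φ (act γ (A.sum s)))
    rw [hsv]
    exact hsum _ hsd

/-- Difference of measures. -/
theorem isMeasure_sub {φ ρ : α → ℝ≥0} (hφ : A.IsMeasure φ) (hρ : A.IsMeasure ρ)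
    (hle : ∀ x, ρ x ≤ φ x) : A.IsMeasure (fun x => φ x - ρ x) := by
  refine ⟨?_, ?_, ?_⟩
  · show φ A.zero - ρ A.zero = 0
    rw [hφ.1, hρ.1]; simp
  · intro a b hab
    show φ (A.add a b) - ρ (A.add a b) = (φ a - ρ a) + (φ b - ρ b)
    rw [hφ.2.1 a b hab, hρ.2.1 a b hab]
    exact (tsub_add_tsub_comm (hle a) (hle b)).symm
  · intro s hs
    show HasSum (fun n => φ (s n) - ρ (s n)) (φ (A.sum s) - ρ (A.sum s))
    have h1 := NNReal.hasSum_coe.2 (hφ.2.2 s hs)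
    have h2 := NNReal.hasSum_coe.2 (hρ.2.2 s hs)
    have h3 := h1.sub h2
    rw [← NNReal.coe_sub (hle (A.sum s))] at h3
    have h4 : (fun n => (φ (s n) : ℝ) - ρ (s n)) = (fun n => ((φ (s n) - ρ (s n) : ℝ≥0) : ℝ)) := by
      funext n; rw [NNReal.coe_sub (hle (s n))]
    rw [h4] at h3
    exact NNReal.hasSum_coe.1 h3

/-- Pointwise sums of measures are measures. -/
theorem isMeasure_tsum (c : ℕ → α → ℝ≥0) (hc : ∀ k, A.IsMeasure (c k))
    (hsummable : ∀ x, Summable fun k => c k x) :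
    A.IsMeasure (fun x => ∑' k, c k x) := by
  refine ⟨?_, ?_, ?_⟩
  · have : ∀ k, c k A.zero = 0 := fun k => (hc k).1
    simp [this]
  · intro a b hab
    show ∑' k, c k (A.add a b) = (∑' k, c k a) + ∑' k, c k b
    have h1 : (fun k => c k (A.add a b)) = fun k => c k a + c k b := by
      funext k; exact (hc k).2.1 a b hab
    rw [show (∑' k, c k (A.add a b)) = ∑' k, (c k a + c k b) from congrArg tsum h1,
      Summable.tsum_add (hsummable a) (hsummable b)]
  · intro s hs
    set F : ℕ → ℝ≥0 := fun n => ∑' k, c k (s n) with hF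
    set L : ℝ≥0 := ∑' k, c k (A.sum s) with hL
    show HasSum F L
    have key : (∑' n, (F n : ℝ≥0∞)) = (L : ℝ≥0∞) := by
      have e1 : ∀ n : ℕ, (F n : ℝ≥0∞) = ∑' k, ((c k (s n) : ℝ≥0∞)) :=
        fun n => ENNReal.coe_tsum (hsummable (s n))
      have e2 : ∀ k : ℕ, (∑' n, ((c k (s n) : ℝ≥0∞))) = ((c k (A.sum s) : ℝ≥0∞)) := by
        intro k
        rw [← ENNReal.coe_tsum ((hc k).2.2 s hs).summable, ((hc k).2.2 s hs).tsum_eq]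
      rw [tsum_congr e1, ENNReal.tsum_comm, tsum_congr e2, hL]
      exact (ENNReal.coe_tsum (hsummable (A.sum s))).symm
    have h5 : HasSum (fun n => (F n : ℝ≥0∞)) (L : ℝ≥0∞) := by
      rw [← key]; exact ENNReal.summable.hasSum
    exact ENNReal.hasSum_coe.1 h5

/-- The meet of two measures. -/
noncomputable def meetFn (A : GCA α) (φ ψ : α → ℝ≥0) (x : α) : ℝ≥0 :=
  ⨅ p : {p : α × α // A.addDef p.1 p.2 ∧ A.add p.1 p.2 = x},
    (φ p.1.1 + ψ p.1.2)

instance decompNonempty (x : α) :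
    Nonempty {p : α × α // A.addDef p.1 p.2 ∧ A.add p.1 p.2 = x} :=
  ⟨⟨(x, A.zero), A.addDef_zero_right x, A.add_zero x⟩⟩

theorem meetFn_le {φ ψ : α → ℝ≥0} {x b c : α} (h : A.addDef b c) (hv : A.add b c = x) :
    A.meetFn φ ψ x ≤ φ b + ψ c :=
  ciInf_le (OrderBot.bddBelow _) (⟨(b, c), h, hv⟩ :
    {p : α × α // A.addDef p.1 p.2 ∧ A.add p.1 p.2 = x})

theorem meetFn_exists_lt {φ ψ : α → ℝ≥0} {x : α} {t : ℝ≥0} (h : A.meetFn φ ψ x < t) :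
    ∃ b c, A.addDef b c ∧ A.add b c = x ∧ φ b + ψ c < t := by
  obtain ⟨⟨⟨b, c⟩, hd, hv⟩, hlt⟩ := exists_lt_of_ciInf_lt h
  exact ⟨b, c, hd, hv, hlt⟩

theorem le_meetFn {φ ψ : α → ℝ≥0} {x : α} {t : ℝ≥0}
    (h : ∀ b c, A.addDef b c → A.add b c = x → t ≤ φ b + ψ c) :
    t ≤ A.meetFn φ ψ x :=
  le_ciInf fun p => h p.1.1 p.1.2 p.2.1 p.2.2

theorem meetFn_le_left {φ ψ : α → ℝ≥0} (hψ : A.IsMeasure ψ) (x : α) :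
    A.meetFn φ ψ x ≤ φ x := by
  have := meetFn_le (φ := φ) (ψ := ψ) (A.addDef_zero_right x) (A.add_zero x)
  rwa [hψ.1, _root_.add_zero] at this

theorem meetFn_le_right {φ ψ : α → ℝ≥0} (hφ : A.IsMeasure φ) (x : α) :
    A.meetFn φ ψ x ≤ ψ x := by
  have := meetFn_le (φ := φ) (ψ := ψ) (A.addDef_zero_left x) (A.zero_add x)
  rwa [hφ.1, _root_.zero_add] at this

theorem meetFn_mono {φ ψ φ' ψ' : α → ℝ≥0} (h1 : ∀ x, φ x ≤ φ' x) (h2 : ∀ x, ψ x ≤ ψ' x)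
    (x : α) : A.meetFn φ ψ x ≤ A.meetFn φ' ψ' x := by
  refine le_ciInf fun p => ?_
  exact le_trans (meetFn_le p.2.1 p.2.2) (add_le_add (h1 _) (h2 _))

/-- The meet of two measures is a measure. -/
theorem isMeasure_meetFn {φ ψ : α → ℝ≥0} (hφ : A.IsMeasure φ) (hψ : A.IsMeasure ψ) :
    A.IsMeasure (A.meetFn φ ψ) := by
  have hzero : A.meetFn φ ψ A.zero = 0 := by
    have h := meetFn_le_left (φ := φ) hψ A.zero
    rw [hφ.1] at h
    exact le_antisymm h zero_le
  have hsigma : ∀ s, A.sumDef s →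
      HasSum (fun n => A.meetFn φ ψ (s n)) (A.meetFn φ ψ (A.sum s)) := by
    intro s hs
    have hsummeet : Summable fun n => A.meetFn φ ψ (s n) :=
      NNReal.summable_of_le (fun n => meetFn_le_left hψ (s n)) (hφ.2.2 s hs).summable
    have hlower : ∑' n, A.meetFn φ ψ (s n) ≤ A.meetFn φ ψ (A.sum s) := by
      refine le_meetFn fun B C hd hv => ?_
      obtain ⟨p, q, hpd, hqd, hpv, hqv, hrel⟩ := A.refinement B C s hd hs hv
      have hple : ∀ n, A.meetFn φ ψ (s n) ≤ φ (p n) + ψ (q n) := fun n =>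
        meetFn_le (hrel n).1 (hrel n).2
      have hsp : Summable fun n => φ (p n) := (hφ.2.2 p hpd).summable
      have hsq : Summable fun n => ψ (q n) := (hψ.2.2 q hqd).summable
      calc ∑' n, A.meetFn φ ψ (s n) ≤ ∑' n, (φ (p n) + ψ (q n)) :=
            Summable.tsum_le_tsum hple hsummeet (hsp.add hsq)
        _ = (∑' n, φ (p n)) + ∑' n, ψ (q n) := Summable.tsum_add hsp hsq
        _ = φ B + ψ C := by
            rw [(hφ.2.2 p hpd).tsum_eq, (hψ.2.2 q hqd).tsum_eq, hpv, hqv]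
    have hupper : A.meetFn φ ψ (A.sum s) ≤ ∑' n, A.meetFn φ ψ (s n) := by
      refine le_of_forall_pos_le_add fun ε hε => ?_
      have hchoice : ∀ n : ℕ, ∃ b c, A.addDef b c ∧ A.add b c = s n ∧
          φ b + ψ c < A.meetFn φ ψ (s n) + ε * (2⁻¹) ^ (n+1) := by
        intro n
        refine meetFn_exists_lt ?_
        have hpos : 0 < ε * (2⁻¹ : ℝ≥0) ^ (n+1) := by
          apply mul_pos hε
          apply pow_pos
          rw [← NNReal.coe_lt_coe]; norm_num
        exact lt_add_of_pos_right _ hpos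
      choose b c hbd hbv hval using hchoice
      have hfun : (fun n => A.add (b n) (c n)) = s := funext hbv
      obtain ⟨hpd, hqd, hD, heq⟩ := A.sum_add b c hbd (by rw [hfun]; exact hs)
      rw [hfun] at heq
      have hsb : Summable fun n => φ (b n) := (hφ.2.2 b hpd).summable
      have hsc : Summable fun n => ψ (c n) := (hψ.2.2 c hqd).summable
      calc A.meetFn φ ψ (A.sum s) ≤ φ (A.sum b) + ψ (A.sum c) := meetFn_le hD heq.symm
        _ = ∑' n, (φ (b n) + ψ (c n)) := by
            rw [Summable.tsum_add hsb hsc, (hφ.2.2 b hpd).tsum_eq, (hψ.2.2 c hqd).tsum_eq]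
        _ ≤ ∑' n, (A.meetFn φ ψ (s n) + ε * (2⁻¹) ^ (n+1)) := by
            refine Summable.tsum_le_tsum (fun n => le_of_lt (hval n)) (hsb.add hsc) ?_
            exact hsummeet.add (summable_eps_geom ε)
        _ = (∑' n, A.meetFn φ ψ (s n)) + ε := by
            rw [Summable.tsum_add hsummeet (summable_eps_geom ε), tsum_eps_geom]
    have : ∑' n, A.meetFn φ ψ (s n) = A.meetFn φ ψ (A.sum s) := le_antisymm hlower hupper
    rw [← this]
    exact hsummeet.hasSum
  refine ⟨hzero, ?_, hsigma⟩
  intro a b hab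
  obtain ⟨hsd, hsv⟩ := sq2_spec hab
  have h1 := hsigma _ hsd
  rw [hsv] at h1
  have h2 : HasSum (fun n => A.meetFn φ ψ (A.sq2 a b n))
      (A.meetFn φ ψ a + A.meetFn φ ψ b) := by
    have hz : ∀ n ∉ ({0, 1} : Finset ℕ), A.meetFn φ ψ (A.sq2 a b n) = 0 := by
      intro n hn
      rcases n with _|_|n
      · simp at hn
      · simp at hn
      · exact hzero
    have h3 := hasSum_sum_of_ne_finset_zero (L := SummationFilter.unconditional ℕ) hz
    have h4 : ∑ i ∈ ({0, 1} : Finset ℕ), A.meetFn φ ψ (A.sq2 a b i)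
        = A.meetFn φ ψ a + A.meetFn φ ψ b := by
      rw [show ({0, 1} : Finset ℕ) = insert 0 {1} from rfl,
        Finset.sum_insert (by simp), Finset.sum_singleton]
      rfl
    rwa [h4] at h3
  exact h1.unique h2

end GCA
namespace GCA

open scoped ENNReal

variable {α : Type*} {A : GCA α}

section ActLemmas

variable {Γ : Type*} [Group Γ] {act : Γ → α → α}

theorem act_cancel (hact : A.IsAction act) (γ : Γ) (x : α) :
    act γ (act γ⁻¹ x) = x := by
  rw [hact.2.1, mul_inv_cancel, hact.1]

theorem act_cancel' (hact : A.IsAction act) (γ : Γ) (x : α) :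
    act γ⁻¹ (act γ x) = x := by
  rw [hact.2.1, inv_mul_cancel, hact.1]

theorem act_le (hact : A.IsAction act) (γ : Γ) {a b : α} (h : A.le a b) :
    A.le (act γ a) (act γ b) := by
  obtain ⟨c, hc, hcv⟩ := h
  obtain ⟨hd, hv⟩ := (hact.2.2 γ).2.1 a c hc
  exact ⟨act γ c, hd, by rw [← hv, hcv]⟩

theorem act_zero (hact : A.IsAction act) (γ : Γ) : act γ A.zero = A.zero :=
  (hact.2.2 γ).1

end ActLemmas

/-- Summability in `ℝ≥0` from bounded partial sums. -/
theorem nnreal_summable_of_partial_le {f : ℕ → ℝ≥0} {B : ℝ≥0}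
    (h : ∀ n, ∑ i ∈ Finset.range n, f i ≤ B) :
    Summable f ∧ ∑' i, f i ≤ B := by
  have hE : ∑' i, (f i : ℝ≥0∞) ≤ (B : ℝ≥0∞) := by
    rw [ENNReal.tsum_eq_iSup_sum]
    refine iSup_le fun s => ?_
    obtain ⟨n, hn⟩ := s.exists_nat_subset_range
    calc ∑ i ∈ s, (f i : ℝ≥0∞) ≤ ∑ i ∈ Finset.range n, (f i : ℝ≥0∞) :=
          Finset.sum_le_sum_of_subset hn
      _ = ((∑ i ∈ Finset.range n, f i : ℝ≥0) : ℝ≥0∞) := (ENNReal.ofNNReal_finsetSum _ _).symm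
      _ ≤ (B : ℝ≥0∞) := ENNReal.coe_le_coe.2 (h n)
  have hsum : Summable f := by
    refine ENNReal.tsum_coe_ne_top_iff_summable.1 ?_
    exact ne_top_of_le_ne_top ENNReal.coe_ne_top hE
  refine ⟨hsum, ?_⟩
  rw [← ENNReal.coe_le_coe, ENNReal.coe_tsum hsum]
  exact hE

/-- An enumeration of a countable group hitting every element beyond any index. -/
theorem exists_good_enum (Γ : Type*) [Group Γ] [Countable Γ] :
    ∃ g : ℕ → Γ, ∀ (γ : Γ) (N : ℕ), ∃ k, N ≤ k ∧ g k = γ := by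
  obtain ⟨f, hf⟩ := exists_surjective_nat Γ
  refine ⟨fun n => f (Nat.unpair n).1, fun γ N => ?_⟩
  obtain ⟨m, hm⟩ := hf γ
  refine ⟨Nat.pair m N, Nat.right_le_pair m N, ?_⟩
  show f (Nat.unpair (Nat.pair m N)).1 = γ
  rw [Nat.unpair_pair]
  exact hm

end GCA
namespace GCA

variable {α : Type*} {A : GCA α}

/-- The vanishing lemma: mutually singular (w.r.t. the group) measures that agree
on invariant elements are zero. -/
theorem vanish {Γ : Type*} [Group Γ] {act : Γ → α → α} (hact : A.IsAction act)
    (hjoin : ∀ s : ℕ → α, ∃ j, (∀ n, A.le (s n) j) ∧ ∀ x, (∀ n, A.le (s n) x) → A.le j x)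
    (g : ℕ → Γ) (hg : ∀ (γ : Γ) (N : ℕ), ∃ k, N ≤ k ∧ g k = γ)
    {p q : α → ℝ≥0} (hp : A.IsMeasure p) (hq : A.IsMeasure q)
    (hmz : ∀ (γ : Γ) (x : α), A.meetFn p (fun y => q (act γ y)) x = 0)
    (hagree : ∀ e, (∀ γ : Γ, act γ e = e) → p e = q e)
    (a : α) : p a = 0 := by
  have key : ∀ ε : ℝ≥0, 0 < ε → p a ≤ ε := by
    intro ε hε
    have hstep : ∀ (k : ℕ) (x : α), ∃ bc : α × α, A.addDef bc.1 bc.2 ∧ A.add bc.1 bc.2 = x ∧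
        p bc.1 + q (act (g k) bc.2) < ε * (2⁻¹) ^ (k+1) := by
      intro k x
      have h0 : A.meetFn p (fun y => q (act (g k) y)) x < ε * (2⁻¹)^(k+1) := by
        rw [hmz (g k) x]
        exact mul_pos hε (pow_pos (by rw [← NNReal.coe_lt_coe]; norm_num) _)
      obtain ⟨b, c, hd, hv, hval⟩ := meetFn_exists_lt h0
      exact ⟨(b, c), hd, hv, hval⟩
    choose BC hd hv hval using hstep
    let aSeq : ℕ → α := fun k => Nat.rec a (fun k x => (BC k x).2) k
    have haS : ∀ k, aSeq (k+1) = (BC k (aSeq k)).2 := fun k => rfl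
    have hchain : ∀ k, A.addDef ((BC k (aSeq k)).1) (aSeq (k+1)) ∧
        aSeq k = A.add ((BC k (aSeq k)).1) (aSeq (k+1)) := by
      intro k
      exact ⟨hd k (aSeq k), (hv k (aSeq k)).symm⟩
    obtain ⟨rr, hrr⟩ := A.remainder aSeq (fun k => (BC k (aSeq k)).1) hchain
    obtain ⟨hsd0, hrd0, hr0⟩ := hrr 0
    simp only [Nat.add_zero] at hsd0 hrd0 hr0
    have hsd0' : A.sumDef (fun i => (BC i (aSeq i)).1) := hsd0
    have hrd0' : A.addDef rr (A.sum (fun i => (BC i (aSeq i)).1)) := hrd0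
    have hr0' : a = A.add rr (A.sum (fun i => (BC i (aSeq i)).1)) := hr0
    have hrr_le : ∀ k, A.le rr (aSeq k) := by
      intro k
      obtain ⟨_, hd2, hv2⟩ := hrr k
      exact ⟨_, hd2, hv2.symm⟩
    have hq_rr : ∀ γ : Γ, q (act γ rr) = 0 := by
      intro γ
      have h2 : ∀ ε' : ℝ≥0, 0 < ε' → q (act γ rr) ≤ ε' := by
        intro ε' hε'
        have htend : Filter.Tendsto (fun k : ℕ => ((ε * (2⁻¹ : ℝ≥0)^(k+1) : ℝ≥0) : ℝ))
            Filter.atTop (nhds 0) :=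
          (NNReal.summable_coe.2 (summable_eps_geom ε)).tendsto_atTop_zero
        have hev : ∀ᶠ k in Filter.atTop, ((ε * (2⁻¹:ℝ≥0)^(k+1) : ℝ≥0) : ℝ) < (ε' : ℝ) :=
          (tendsto_order.1 htend).2 (ε' : ℝ) (by exact_mod_cast hε')
        obtain ⟨N, hN0⟩ := Filter.eventually_atTop.1 hev
        have hN : ∀ k, N ≤ k → ε * (2⁻¹:ℝ≥0)^(k+1) < ε' := by
          intro k hk
          have := hN0 k hk
          exact_mod_cast this
        obtain ⟨k, hk1, hk2⟩ := hg γ N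
        have h3 : A.le (act γ rr) (act γ (aSeq (k+1))) := act_le hact γ (hrr_le (k+1))
        have h4 : q (act γ (aSeq (k+1))) < ε * (2⁻¹:ℝ≥0)^(k+1) := by
          rw [haS k, ← hk2]
          exact lt_of_le_of_lt le_add_self (hval k (aSeq k))
        exact ((measure_mono hq h3).trans h4.le).trans (hN k hk1).le
      refine le_antisymm ?_ zero_le
      refine le_of_forall_pos_le_add fun ε' hε' => ?_
      rw [_root_.zero_add]; exact h2 ε' hε'
    obtain ⟨j, hjub, hjleast⟩ := hjoin (fun k => act (g k) rr)
    have hmem : ∀ γ : Γ, A.le (act γ rr) j := by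
      intro γ
      obtain ⟨k, _, hk⟩ := hg γ 0
      rw [← hk]; exact hjub k
    have hinv1 : ∀ γ : Γ, A.le j (act γ j) := by
      intro γ
      refine hjleast _ (fun k => ?_)
      have h5 : A.le (act (γ⁻¹ * g k) rr) j := hmem _
      have h6 := act_le hact γ h5
      rw [hact.2.1, mul_inv_cancel_left] at h6
      exact h6
    have hinv : ∀ γ : Γ, act γ j = j := by
      intro γ
      refine le_antisymm' ?_ (hinv1 γ)
      have h6 := act_le hact γ (hinv1 γ⁻¹)
      rw [act_cancel hact γ j] at h6
      exact h6
    have hsum0 : (fun k => q (act (g k) rr)) = fun _ => 0 := funext fun k => hq_rr (g k)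
    have hqj : q j ≤ 0 := by
      have h7 := measure_lub_le_tsum hq (fun k => act (g k) rr) j hjub hjleast
        (by rw [hsum0]; exact summable_zero)
      rwa [hsum0, tsum_zero] at h7
    have hprr : p rr = 0 := by
      have h7 : A.le rr j := by
        have h8 := hmem 1
        rwa [hact.1] at h8
      have h8 : p rr ≤ p j := measure_mono hp h7
      rw [hagree j hinv] at h8
      exact le_antisymm (h8.trans hqj) zero_le
    have hp_piece : ∀ k, p ((BC k (aSeq k)).1) ≤ ε * (2⁻¹:ℝ≥0)^(k+1) := fun k =>
      le_of_lt (lt_of_le_of_lt le_self_add (hval k (aSeq k)))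
    have hsummP : Summable fun i => p ((BC i (aSeq i)).1) := (hp.2.2 _ hsd0').summable
    calc p a = p (A.add rr (A.sum (fun i => (BC i (aSeq i)).1))) := by rw [← hr0']
      _ = p rr + p (A.sum (fun i => (BC i (aSeq i)).1)) := hp.2.1 _ _ hrd0'
      _ = p rr + ∑' i, p ((BC i (aSeq i)).1) := by rw [(hp.2.2 _ hsd0').tsum_eq]
      _ ≤ 0 + ∑' i, ε * (2⁻¹:ℝ≥0)^(i+1) := by
          rw [hprr]
          exact add_le_add le_rfl (Summable.tsum_le_tsum hp_piece hsummP (summable_eps_geom ε))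
      _ = ε := by rw [_root_.zero_add, tsum_eps_geom]
  refine le_antisymm ?_ zero_le
  refine le_of_forall_pos_le_add fun ε hε => ?_
  rw [_root_.zero_add]; exact key ε hε

end GCA
/-- Let `Γ` be a countable group acting on a GCA `A` with countable joins, and
let `μ` and `ν` be finite measures on `A`. Then `μ` and `ν` agree on every
`Γ`-invariant element of `A` iff they are equidecomposable: there are finite
measures `(c n)` with labels `(g n)` in `Γ` such that `μ = ∑ₙ c n` and
`ν = ∑ₙ (g n) • (c n)` pointwise, where `(γ • c)(a) = c (γ⁻¹ • a)`. -/
theorem GCA.measures_agree_iff_equidecomposable {α Γ : Type*} [Group Γ]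
    [Countable Γ] (A : GCA α) (act : Γ → α → α) (hact : A.IsAction act)
    (hjoin : ∀ s : ℕ → α, ∃ j, (∀ n, A.le (s n) j) ∧
      ∀ x, (∀ n, A.le (s n) x) → A.le j x)
    (μ ν : α → ℝ≥0) (hμ : A.IsMeasure μ) (hν : A.IsMeasure ν) :
    (∀ a, (∀ γ : Γ, act γ a = a) → μ a = ν a) ↔
      ∃ (c : ℕ → α → ℝ≥0) (g : ℕ → Γ), (∀ n, A.IsMeasure (c n)) ∧
        (∀ x, HasSum (fun n => c n x) (μ x)) ∧
        (∀ x, HasSum (fun n => c n (act (g n)⁻¹ x)) (ν x)) := by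
  obtain ⟨g, hg⟩ := GCA.exists_good_enum Γ
  constructor
  · intro hagree
    let M : ℕ → (α → ℝ≥0) × (α → ℝ≥0) := fun k => Nat.rec (μ, ν)
      (fun k pq => (fun x => pq.1 x - A.meetFn pq.1 (fun y => pq.2 (act (g k) y)) x,
                    fun x => pq.2 x -
                      A.meetFn pq.1 (fun y => pq.2 (act (g k) y)) (act (g k)⁻¹ x))) k
    let cs : ℕ → α → ℝ≥0 := fun k => A.meetFn (M k).1 (fun y => (M k).2 (act (g k) y))
    have hMsucc1 : ∀ k, (M (k+1)).1 = fun x => (M k).1 x - cs k x := fun k => rfl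
    have hMsucc2 : ∀ k, (M (k+1)).2 = fun x => (M k).2 x - cs k (act (g k)⁻¹ x) :=
      fun k => rfl
    have hMmeas : ∀ k, A.IsMeasure (M k).1 ∧ A.IsMeasure (M k).2 := by
      intro k
      induction k with
      | zero => exact ⟨hμ, hν⟩
      | succ k ih =>
        have hqm : A.IsMeasure (fun y => (M k).2 (act (g k) y)) :=
          GCA.isMeasure_comp_act hact ih.2 (g k)
        have hcm : A.IsMeasure (cs k) := GCA.isMeasure_meetFn ih.1 hqm
        constructor
        · rw [hMsucc1]
          exact GCA.isMeasure_sub ih.1 hcm (fun x => GCA.meetFn_le_left hqm x)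
        · rw [hMsucc2]
          have hq2 : A.IsMeasure (fun x => cs k (act (g k)⁻¹ x)) :=
            GCA.isMeasure_comp_act hact hcm (g k)⁻¹
          refine GCA.isMeasure_sub ih.2 hq2 (fun x => ?_)
          have h1 := GCA.meetFn_le_right (A := A)
            (ψ := fun y => (M k).2 (act (g k) y)) ih.1 (act (g k)⁻¹ x)
          simpa only [GCA.act_cancel hact] using h1
    have hqmeas : ∀ k, A.IsMeasure (fun y => (M k).2 (act (g k) y)) :=
      fun k => GCA.isMeasure_comp_act hact (hMmeas k).2 (g k)
    have hcmeas : ∀ k, A.IsMeasure (cs k) :=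
      fun k => GCA.isMeasure_meetFn (hMmeas k).1 (hqmeas k)
    have hcle1 : ∀ k x, cs k x ≤ (M k).1 x :=
      fun k x => GCA.meetFn_le_left (hqmeas k) x
    have hcle2 : ∀ k x, cs k (act (g k)⁻¹ x) ≤ (M k).2 x := by
      intro k x
      have h1 := GCA.meetFn_le_right (A := A)
        (ψ := fun y => (M k).2 (act (g k) y)) (hMmeas k).1 (act (g k)⁻¹ x)
      simpa only [GCA.act_cancel hact] using h1
    have hpart1 : ∀ k x, (M k).1 x + ∑ i ∈ Finset.range k, cs i x = μ x := by
      intro k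
      induction k with
      | zero =>
        intro x
        show μ x + ∑ i ∈ Finset.range 0, cs i x = μ x
        simp
      | succ k ih =>
        intro x
        rw [Finset.sum_range_succ]
        have e1 : (M (k+1)).1 x = (M k).1 x - cs k x := rfl
        rw [e1]
        calc (M k).1 x - cs k x + (∑ i ∈ Finset.range k, cs i x + cs k x)
            = (M k).1 x - cs k x + (cs k x + ∑ i ∈ Finset.range k, cs i x) := by
              rw [_root_.add_comm (∑ i ∈ Finset.range k, cs i x) (cs k x)]
          _ = ((M k).1 x - cs k x + cs k x) + ∑ i ∈ Finset.range k, cs i x := by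
              rw [_root_.add_assoc]
          _ = (M k).1 x + ∑ i ∈ Finset.range k, cs i x := by
              rw [tsub_add_cancel_of_le (hcle1 k x)]
          _ = μ x := ih x
    have hpart2 : ∀ k x, (M k).2 x + ∑ i ∈ Finset.range k, cs i (act (g i)⁻¹ x) = ν x := by
      intro k
      induction k with
      | zero =>
        intro x
        show ν x + ∑ i ∈ Finset.range 0, cs i (act (g i)⁻¹ x) = ν x
        simp
      | succ k ih =>
        intro x
        rw [Finset.sum_range_succ]
        have e1 : (M (k+1)).2 x = (M k).2 x - cs k (act (g k)⁻¹ x) := rfl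
        rw [e1]
        calc (M k).2 x - cs k (act (g k)⁻¹ x)
              + (∑ i ∈ Finset.range k, cs i (act (g i)⁻¹ x) + cs k (act (g k)⁻¹ x))
            = (M k).2 x - cs k (act (g k)⁻¹ x)
              + (cs k (act (g k)⁻¹ x) + ∑ i ∈ Finset.range k, cs i (act (g i)⁻¹ x)) := by
              rw [_root_.add_comm (∑ i ∈ Finset.range k, cs i (act (g i)⁻¹ x))]
          _ = ((M k).2 x - cs k (act (g k)⁻¹ x) + cs k (act (g k)⁻¹ x))
              + ∑ i ∈ Finset.range k, cs i (act (g i)⁻¹ x) := by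
              rw [_root_.add_assoc]
          _ = (M k).2 x + ∑ i ∈ Finset.range k, cs i (act (g i)⁻¹ x) := by
              rw [tsub_add_cancel_of_le (hcle2 k x)]
          _ = ν x := ih x
    have hsumm1 : ∀ x, Summable (fun k => cs k x) ∧ ∑' k, cs k x ≤ μ x := by
      intro x
      refine GCA.nnreal_summable_of_partial_le (fun n => ?_)
      rw [← hpart1 n x]; exact le_add_self
    have hsumm2 : ∀ x, Summable (fun k => cs k (act (g k)⁻¹ x)) ∧
        ∑' k, cs k (act (g k)⁻¹ x) ≤ ν x := by
      intro x
      refine GCA.nnreal_summable_of_partial_le (fun n => ?_)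
      rw [← hpart2 n x]; exact le_add_self
    let pInf : α → ℝ≥0 := fun x => μ x - ∑' k, cs k x
    let qInf : α → ℝ≥0 := fun x => ν x - ∑' k, cs k (act (g k)⁻¹ x)
    have hpMeas : A.IsMeasure pInf :=
      GCA.isMeasure_sub hμ (GCA.isMeasure_tsum cs hcmeas (fun x => (hsumm1 x).1))
        (fun x => (hsumm1 x).2)
    have hqMeas : A.IsMeasure qInf :=
      GCA.isMeasure_sub hν
        (GCA.isMeasure_tsum (fun k x => cs k (act (g k)⁻¹ x))
          (fun k => GCA.isMeasure_comp_act hact (hcmeas k) (g k)⁻¹)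
          (fun x => (hsumm2 x).1))
        (fun x => (hsumm2 x).2)
    have hpLe : ∀ k x, pInf x ≤ (M k).1 x := by
      intro k x
      have h1 : (M k).1 x = μ x - ∑ i ∈ Finset.range k, cs i x :=
        eq_tsub_of_add_eq (hpart1 k x)
      rw [h1]
      exact tsub_le_tsub_left (Summable.sum_le_tsum _ (fun _ _ => zero_le) (hsumm1 x).1) _
    have hqLe : ∀ k x, qInf x ≤ (M k).2 x := by
      intro k x
      have h1 : (M k).2 x = ν x - ∑ i ∈ Finset.range k, cs i (act (g i)⁻¹ x) :=
        eq_tsub_of_add_eq (hpart2 k x)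
      rw [h1]
      exact tsub_le_tsub_left (Summable.sum_le_tsum _ (fun _ _ => zero_le) (hsumm2 x).1) _
    have hmz : ∀ (γ : Γ) (x : α), A.meetFn pInf (fun y => qInf (act γ y)) x = 0 := by
      intro γ x
      refine le_antisymm ?_ zero_le
      refine le_of_forall_pos_le_add fun ε hε => ?_
      rw [_root_.zero_add]
      have htend := (NNReal.summable_coe.2 (hsumm1 x).1).tendsto_atTop_zero
      have hev : ∀ᶠ k in Filter.atTop, ((cs k x : ℝ≥0) : ℝ) < (ε : ℝ) :=
        (tendsto_order.1 htend).2 _ (by exact_mod_cast hε)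
      obtain ⟨N, hN⟩ := Filter.eventually_atTop.1 hev
      obtain ⟨k, hk1, hk2⟩ := hg γ N
      have hck : cs k x < ε := by exact_mod_cast hN k hk1
      have hmono : A.meetFn pInf (fun y => qInf (act γ y)) x ≤ cs k x := by
        rw [← hk2]
        exact GCA.meetFn_mono (hpLe k) (fun y => hqLe k (act (g k) y)) x
      exact hmono.trans hck.le
    have hmz' : ∀ (γ : Γ) (x : α), A.meetFn qInf (fun y => pInf (act γ y)) x = 0 := by
      intro γ x
      refine le_antisymm ?_ zero_le
      refine le_of_forall_pos_le_add fun ε hε => ?_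
      rw [_root_.zero_add]
      have h0 : A.meetFn pInf (fun y => qInf (act γ⁻¹ y)) (act γ x) < ε := by
        rw [hmz]; exact hε
      obtain ⟨B, C, hdBC, hvBC, hvalBC⟩ := GCA.meetFn_exists_lt h0
      obtain ⟨hd2, hv2⟩ := (hact.2.2 γ⁻¹).2.1 B C hdBC
      have hx : A.add (act γ⁻¹ B) (act γ⁻¹ C) = x := by
        rw [← hv2, hvBC, GCA.act_cancel' hact]
      obtain ⟨hd3, hv3⟩ := GCA.comm hd2
      have hx2 : A.add (act γ⁻¹ C) (act γ⁻¹ B) = x := by rw [← hv3]; exact hx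
      have h4 := GCA.meetFn_le (A := A) (φ := qInf)
        (ψ := fun y => pInf (act γ y)) hd3 hx2
      simp only [GCA.act_cancel hact] at h4
      calc A.meetFn qInf (fun y => pInf (act γ y)) x
          ≤ qInf (act γ⁻¹ C) + pInf B := h4
        _ = pInf B + qInf (act γ⁻¹ C) := _root_.add_comm _ _
        _ ≤ ε := hvalBC.le
    have hagreeInf : ∀ e, (∀ γ : Γ, act γ e = e) → pInf e = qInf e := by
      intro e he
      have h1 : (fun k => cs k (act (g k)⁻¹ e)) = fun k => cs k e :=
        funext fun k => by rw [he]
      show μ e - ∑' k, cs k e = ν e - ∑' k, cs k (act (g k)⁻¹ e)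
      rw [hagree e he, h1]
    have hp0 : ∀ x, pInf x = 0 :=
      GCA.vanish hact hjoin g hg hpMeas hqMeas hmz hagreeInf
    have hq0 : ∀ x, qInf x = 0 :=
      GCA.vanish hact hjoin g hg hqMeas hpMeas hmz' (fun e he => (hagreeInf e he).symm)
    refine ⟨cs, g, hcmeas, ?_, ?_⟩
    · intro x
      have hz : μ x - ∑' k, cs k x = 0 := hp0 x
      have h1 : ∑' k, cs k x = μ x :=
        le_antisymm (hsumm1 x).2 (tsub_eq_zero_iff_le.1 hz)
      rw [← h1]
      exact (hsumm1 x).1.hasSum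
    · intro x
      have hz : ν x - ∑' k, cs k (act (g k)⁻¹ x) = 0 := hq0 x
      have h1 : ∑' k, cs k (act (g k)⁻¹ x) = ν x :=
        le_antisymm (hsumm2 x).2 (tsub_eq_zero_iff_le.1 hz)
      rw [← h1]
      exact (hsumm2 x).1.hasSum
  · rintro ⟨c, g', hcm, hμs, hνs⟩ a hainv
    have h1 : (fun n => c n (act (g' n)⁻¹ a)) = fun n => c n a :=
      funext fun n => by rw [hainv]
    have h2 := hνs a
    rw [h1] at h2
    exact (hμs a).unique h2
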